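/- (Theorem 4, cubic convergence rate of the TLB-based US algorithm.) Let Θ ⊆ ℝ be an open interval, let g : Θ → ℝ be three times continuously differentiable, let θ* ∈ Θ satisfy g(θ*) = 0 and g'(θ*) ≠ 0, and let b3 be a constant. Suppose (θ^(t))_{t≥0} is a sequence in Θ with θ^(t) ≠ θ* for all t, θ^(t) → θ*, and g(θ^(t)) + g'(θ^(t))(θ^(t+1) − θ^(t)) + (g''(θ^(t))/2)(θ^(t+1) − θ^(t))² + (b3/6)(θ^(t+1) − θ^(t))³ = 0 for every t. Then lim_{t→∞} |θ^(t+1) − θ*| / |θ^(t) − θ*|³ = |(b3 − g'''(θ*)) / (6 g'(θ*))|; in particular this limit is finite and is positive whenever b3 ≠ g'''(θ*). -/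

import Mathlib

open Filter Set Topology


/-- Theorem 4, cubic convergence rate of the TLB-based US algorithm:
for a three times continuously differentiable `g` on an open interval `Θ` with
`g(θ*) = 0`, `g'(θ*) ≠ 0`, and a US sequence `θ^(t) → θ*` (with `θ^(t) ≠ θ*`) solving
the cubic U-equation with TLB constant `b₃`, the convergence is cubic with limit
`|(b₃ − g'''(θ*)) / (6 g'(θ*))|`, which is positive whenever `b₃ ≠ g'''(θ*)`. -/
theorem stmt_11 (Θ : Set ℝ) (hΘopen : IsOpen Θ) (hΘ : Θ.OrdConnected)
    (g g' g'' g''' : ℝ → ℝ) (b₃ : ℝ)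
    (hderiv : ∀ θ ∈ Θ, HasDerivAt g (g' θ) θ)
    (hderiv' : ∀ θ ∈ Θ, HasDerivAt g' (g'' θ) θ)
    (hderiv'' : ∀ θ ∈ Θ, HasDerivAt g'' (g''' θ) θ)
    (hcont''' : ContinuousOn g''' Θ)
    (θstar : ℝ) (hθstar : θstar ∈ Θ) (hroot : g θstar = 0) (hg' : g' θstar ≠ 0)
    (θ : ℕ → ℝ) (hmem : ∀ t, θ t ∈ Θ) (hne : ∀ t, θ t ≠ θstar)
    (hconv : Filter.Tendsto θ Filter.atTop (nhds θstar))
    (hiter : ∀ t, g (θ t) + g' (θ t) * (θ (t + 1) - θ t) +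
      (g'' (θ t) / 2) * (θ (t + 1) - θ t) ^ 2 +
      (b₃ / 6) * (θ (t + 1) - θ t) ^ 3 = 0) :
    Filter.Tendsto (fun t => |θ (t + 1) - θstar| / |θ t - θstar| ^ 3) Filter.atTop
      (nhds |(b₃ - g''' θstar) / (6 * g' θstar)|) ∧
      (b₃ ≠ g''' θstar → 0 < |(b₃ - g''' θstar) / (6 * g' θstar)|) := by
  have hΘnhds : Θ ∈ 𝓝 θstar := hΘopen.mem_nhds hθstar
  -- the auxiliary function ψ
  set ψ : ℝ → ℝ := fun x => g x - g' x * (x - θstar) + g'' x / 2 * (x - θstar) ^ 2 with hψdef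
  have hψderiv : ∀ x ∈ Θ, HasDerivAt ψ (g''' x / 2 * (x - θstar) ^ 2) x := by
    intro x hx
    have h1 : HasDerivAt (fun y : ℝ => y - θstar) 1 x := (hasDerivAt_id x).sub_const θstar
    have := ((hderiv x hx).sub ((hderiv' x hx).mul h1)).add
      (((hderiv'' x hx).div_const 2).mul (h1.pow 2))
    refine this.congr_deriv ?_
    rw [Pi.pow_apply]
    norm_num
    ring
  -- continuity facts at θstar
  have hca''' : ContinuousAt g''' θstar := hcont'''.continuousAt hΘnhds
  have hca'' : ContinuousAt g'' θstar := (hderiv'' θstar hθstar).continuousAt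
  have hca' : ContinuousAt g' θstar := (hderiv' θstar hθstar).continuousAt
  have hcaψ : ContinuousAt ψ θstar := (hψderiv θstar hθstar).continuousAt
  have hψ0 : ψ θstar = 0 := by simp [hψdef, hroot]
  -- L'Hôpital: ψ x / (x - θstar)^3 → g''' θstar / 6
  have hlhop : Tendsto (fun x => ψ x / (x - θstar) ^ 3) (𝓝[≠] θstar)
      (𝓝 (g''' θstar / 6)) := by
    apply HasDerivAt.lhopital_zero_nhdsNE
      (f' := fun x => g''' x / 2 * (x - θstar) ^ 2)
      (g' := fun x => 3 * (x - θstar) ^ 2)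
    · filter_upwards [mem_nhdsWithin_of_mem_nhds hΘnhds] with x hx
      exact hψderiv x hx
    · refine Eventually.of_forall fun x => ?_
      have h1 : HasDerivAt (fun y : ℝ => y - θstar) 1 x := (hasDerivAt_id x).sub_const θstar
      refine (h1.pow 3).congr_deriv ?_
      norm_num
    · filter_upwards [self_mem_nhdsWithin] with x hx
      have : x - θstar ≠ 0 := sub_ne_zero.mpr hx
      positivity
    · have := hcaψ.tendsto
      rw [hψ0] at this
      exact this.mono_left nhdsWithin_le_nhds
    · have : Tendsto (fun x : ℝ => (x - θstar) ^ 3) (𝓝 θstar) (𝓝 ((θstar - θstar) ^ 3)) :=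
        ((continuous_id.sub continuous_const).pow 3).tendsto θstar
      simpa using this.mono_left nhdsWithin_le_nhds
    · have h6 : Tendsto (fun x => g''' x / 6) (𝓝[≠] θstar) (𝓝 (g''' θstar / 6)) :=
        (hca'''.tendsto.div_const 6).mono_left nhdsWithin_le_nhds
      refine h6.congr' ?_
      filter_upwards [self_mem_nhdsWithin] with x hx
      have h0 : (x - θstar) ^ 2 ≠ 0 := pow_ne_zero 2 (sub_ne_zero.mpr hx)
      have h0' : x - θstar ≠ 0 := sub_ne_zero.mpr hx
      field_simp
      ring
  -- θ tends to θstar within the punctured neighborhood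
  have hθpunct : Tendsto θ atTop (𝓝[≠] θstar) := by
    rw [tendsto_nhdsWithin_iff]
    exact ⟨hconv, Eventually.of_forall fun t => hne t⟩
  have hψlim : Tendsto (fun t => ψ (θ t) / (θ t - θstar) ^ 3) atTop (𝓝 (g''' θstar / 6)) :=
    hlhop.comp hθpunct
  -- convergence of the shifted sequence
  have hconv1 : Tendsto (fun t => θ (t + 1)) atTop (𝓝 θstar) :=
    hconv.comp (tendsto_add_atTop_nat 1)
  -- the multiplier M
  set M : ℕ → ℝ := fun t => g' (θ t) + g'' (θ t) / 2 * ((θ (t+1) - θstar) - 2 * (θ t - θstar))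
      + b₃ / 6 * ((θ (t+1) - θstar) ^ 2 - 3 * (θ (t+1) - θstar) * (θ t - θstar)
        + 3 * (θ t - θstar) ^ 2) with hMdef
  have hMlim : Tendsto M atTop (𝓝 (g' θstar)) := by
    have he : Tendsto (fun t => θ t - θstar) atTop (𝓝 0) := by
      simpa using hconv.sub_const θstar
    have he1 : Tendsto (fun t => θ (t + 1) - θstar) atTop (𝓝 0) := by
      simpa using hconv1.sub_const θstar
    have h1 : Tendsto (fun t => g' (θ t)) atTop (𝓝 (g' θstar)) := hca'.tendsto.comp hconv
    have h2 : Tendsto (fun t => g'' (θ t)) atTop (𝓝 (g'' θstar)) := hca''.tendsto.comp hconv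
    have key : Tendsto M atTop (𝓝 (g' θstar + g'' θstar / 2 * (0 - 2 * 0)
        + b₃ / 6 * (0 ^ 2 - 3 * 0 * 0 + 3 * 0 ^ 2))) := by
      exact (h1.add ((h2.div_const 2).mul (he1.sub (he.const_mul 2)))).add
        ((((he1.pow 2).sub ((he1.const_mul 3).mul he)).add ((he.pow 2).const_mul 3)).const_mul (b₃/6))
    simpa using key
  -- key algebraic identity
  have hkey : ∀ t, M t * (θ (t + 1) - θstar) =
      b₃ / 6 * (θ t - θstar) ^ 3 - ψ (θ t) := by
    intro t
    simp only [hMdef, hψdef]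
    linear_combination hiter t
  have hMne : ∀ᶠ t in atTop, M t ≠ 0 := hMlim.eventually_ne hg'
  -- limit of the numerator over (θ t - θstar)^3
  have hNlim : Tendsto (fun t => (b₃ / 6 * (θ t - θstar) ^ 3 - ψ (θ t)) / (θ t - θstar) ^ 3)
      atTop (𝓝 (b₃ / 6 - g''' θstar / 6)) := by
    have := (tendsto_const_nhds (x := b₃ / 6) (f := atTop)).sub hψlim
    refine this.congr fun t => ?_
    have h0 : (θ t - θstar) ^ 3 ≠ 0 := pow_ne_zero 3 (sub_ne_zero.mpr (hne t))
    rw [sub_div, mul_div_assoc, div_self h0, mul_one]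
  -- the signed ratio converges
  have hratio : Tendsto (fun t => (θ (t + 1) - θstar) / (θ t - θstar) ^ 3) atTop
      (𝓝 ((b₃ / 6 - g''' θstar / 6) / g' θstar)) := by
    have := hNlim.div hMlim hg'
    refine this.congr' ?_
    filter_upwards [hMne] with t hM0
    have h0 : (θ t - θstar) ^ 3 ≠ 0 := pow_ne_zero 3 (sub_ne_zero.mpr (hne t))
    rw [Pi.div_apply, ← hkey t]
    field_simp
  have hval : |(b₃ / 6 - g''' θstar / 6) / g' θstar| = |(b₃ - g''' θstar) / (6 * g' θstar)| := by
    congr 1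
    field_simp
  constructor
  · have := hratio.abs
    rw [hval] at this
    refine this.congr fun t => ?_
    rw [abs_div, abs_pow]
  · intro hb
    have hnum : b₃ - g''' θstar ≠ 0 := sub_ne_zero.mpr hb
    have hden : (6 : ℝ) * g' θstar ≠ 0 := mul_ne_zero (by norm_num) hg'
    exact abs_pos.mpr (div_ne_zero hnum hden)
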